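/- Let A be an associative ring and let e, h, f ∈ A satisfy e·f − f·e = h and h·e − e·h = 2e. Then for all integers i, j ≥ 1, [[e^i, f], e^j] = 2·i·j·e^{i+j−1}, where [a,b] = a·b − b·a. -/

import Mathlib

lemma mul_lie' {A : Type*} [Ring A] (a b c : A) :
    ⁅a * b, c⁆ = a * ⁅b, c⁆ + ⁅a, c⁆ * b := by
  simp only [Ring.lie_def]; noncomm_ring

lemma lie_mul' {A : Type*} [Ring A] (a b c : A) :
    ⁅a, b * c⁆ = b * ⁅a, c⁆ + ⁅a, b⁆ * c := by
  simp only [Ring.lie_def]; noncomm_ring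

/-- Let `A` be an associative ring and `e h f ∈ A` with `e*f - f*e = h` and
`h*e - e*h = 2*e`.  Then for all `i, j ≥ 1`,
`[[e^i, f], e^j] = 2*i*j • e^(i+j-1)`, where `[a, b] = a*b - b*a`. -/
theorem commutator_pow_identity (A : Type*) [Ring A] (e h f : A)
    (hef : e * f - f * e = h) (hhe : h * e - e * h = 2 * e) :
    ∀ i j : ℕ, 1 ≤ i → 1 ≤ j →
      ⁅⁅e ^ i, f⁆, e ^ j⁆ = (2 * i * j) • e ^ (i + j - 1) := by
  have hef' : ⁅e, f⁆ = h := hef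
  have hhe' : ⁅h, e⁆ = 2 * e := hhe
  have hpe : ∀ n : ℕ, ⁅e ^ n, e⁆ = 0 := by
    intro n; simp [Ring.lie_def, (Commute.pow_self e n).eq]
  have key1 : ∀ i : ℕ, 1 ≤ i → ⁅⁅e ^ i, f⁆, e⁆ = (2 * i) • e ^ i := by
    intro i hi
    induction i with
    | zero => omega
    | succ n ih =>
      rcases Nat.eq_or_lt_of_le hi with h1 | h1
      · -- n = 0
        have hn : n = 0 := by omega
        subst hn
        simp only [zero_add, pow_one, hef', hhe', mul_one, two_smul, two_mul]
      · have hn : 1 ≤ n := by omega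
        have ihn := ih hn
        calc ⁅⁅e ^ (n + 1), f⁆, e⁆
            = ⁅⁅e * e ^ n, f⁆, e⁆ := by rw [← pow_succ']
          _ = ⁅e * ⁅e ^ n, f⁆ + ⁅e, f⁆ * e ^ n, e⁆ := by rw [mul_lie']
          _ = ⁅e * ⁅e ^ n, f⁆, e⁆ + ⁅h * e ^ n, e⁆ := by rw [hef']; simp only [Ring.lie_def]; noncomm_ring
          _ = (e * ⁅⁅e ^ n, f⁆, e⁆ + ⁅e, e⁆ * ⁅e ^ n, f⁆)
              + (h * ⁅e ^ n, e⁆ + ⁅h, e⁆ * e ^ n) := by rw [mul_lie', mul_lie']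
          _ = e * ((2 * n) • e ^ n) + (2 * e) * e ^ n := by
              rw [ihn, (by rw [Ring.lie_def, sub_self] : ⁅e, e⁆ = (0:A)), hpe, hhe']; simp
          _ = (2 * (n + 1)) • e ^ (n + 1) := by
              rw [mul_smul_comm, ← pow_succ']
              have : (2 * e) * e ^ n = 2 • e ^ (n + 1) := by
                rw [two_smul, pow_succ', two_mul, add_mul]
              rw [this, ← add_smul, Nat.mul_succ]
  intro i j hi hj
  induction j with
  | zero => omega
  | succ m ihm =>
    rcases Nat.eq_or_lt_of_le hj with h1 | h1
    · have hm : m = 0 := by omega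
      subst hm
      simpa using key1 i hi
    · have hm : 1 ≤ m := by omega
      have ihm' := ihm hm
      have hidx : i + m - 1 + 1 = i + (m + 1) - 1 := by omega
      calc ⁅⁅e ^ i, f⁆, e ^ (m + 1)⁆
          = ⁅⁅e ^ i, f⁆, e ^ m * e⁆ := by rw [← pow_succ]
        _ = e ^ m * ⁅⁅e ^ i, f⁆, e⁆ + ⁅⁅e ^ i, f⁆, e ^ m⁆ * e := by rw [lie_mul']
        _ = e ^ m * ((2 * i) • e ^ i) + ((2 * i * m) • e ^ (i + m - 1)) * e := by
            rw [key1 i hi, ihm']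
        _ = (2 * i) • e ^ (i + m) + (2 * i * m) • e ^ (i + (m + 1) - 1) := by
            rw [mul_smul_comm, smul_mul_assoc, ← pow_succ, hidx, ← pow_add,
              add_comm m i]
        _ = (2 * i * (m + 1)) • e ^ (i + (m + 1) - 1) := by
            have : i + m = i + (m + 1) - 1 := by omega
            rw [this, ← add_smul, Nat.mul_succ]
            congr 1
            ring
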